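/- M-step closed form for the Gaussian parameters (weighted Gaussian maximum likelihood): let x_1,…,x_N ∈ ℝ^d, let w_1,…,w_N ≥ 0 with W = Σ_{i=1}^N w_i > 0, and define μ* = (1/W)·Σ_{i=1}^N w_i·x_i and Σ* = (1/W)·Σ_{i=1}^N w_i·(x_i − μ*)(x_i − μ*)ᵀ; assume Σ* is positive definite. Then for every μ ∈ ℝ^d and every positive definite matrix Σ ∈ ℝ^{d×d}, Σ_{i=1}^N w_i·log N(x_i; μ*, Σ*) ≥ Σ_{i=1}^N w_i·log N(x_i; μ, Σ). -/

import Mathlib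

open Matrix

/-- Multivariate Gaussian log-density with mean `μ` and covariance `S`. -/
noncomputable def gaussLogDensity (d : ℕ) (x μ : Fin d → ℝ)
    (S : Matrix (Fin d) (Fin d) ℝ) : ℝ :=
  -((d : ℝ) / 2) * Real.log (2 * Real.pi) - (1 / 2) * Real.log S.det
    - (1 / 2) * ((x - μ) ⬝ᵥ (S⁻¹ *ᵥ (x - μ)))

lemma mstep_posdef_conj {d : ℕ} {A C : Matrix (Fin d) (Fin d) ℝ} (hA : A.PosDef)
    (hC : C.IsHermitian) (hCu : IsUnit C.det) : (C * A * C).PosDef := by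
  refine posDef_iff_dotProduct_mulVec.mpr ⟨?_, ?_⟩
  · unfold Matrix.IsHermitian
    rw [conjTranspose_mul, conjTranspose_mul, hC.eq, hA.1.eq, mul_assoc]
  · intro x hx
    have hCx : C *ᵥ x ≠ 0 := by
      intro h
      have hinj := Matrix.mulVec_injective_iff_isUnit.mpr (isUnit_iff_isUnit_det _ |>.2 hCu)
      exact hx (hinj (by rw [h, Matrix.mulVec_zero]))
    have key : star x ⬝ᵥ (C * A * C) *ᵥ x = star (C *ᵥ x) ⬝ᵥ A *ᵥ (C *ᵥ x) := by
      rw [← mulVec_mulVec, ← mulVec_mulVec, dotProduct_mulVec, star_mulVec, hC.eq]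
    rw [key]
    exact hA.dotProduct_mulVec_pos hCx

lemma mstep_trace_eq_sum_eigs {d : ℕ} {A : Matrix (Fin d) (Fin d) ℝ} (hA : A.IsHermitian) :
    A.trace = ∑ i, hA.eigenvalues i := by
  simpa using hA.trace_eq_sum_eigenvalues

lemma mstep_logdet_le_trace {d : ℕ} {M : Matrix (Fin d) (Fin d) ℝ} (hM : M.PosDef) :
    Real.log M.det + d ≤ M.trace := by
  have hdet : M.det = ∏ i, hM.1.eigenvalues i := by
    rw [hM.1.det_eq_prod_eigenvalues]; norm_num
  rw [hdet, Real.log_prod (fun i _ => (hM.eigenvalues_pos i).ne'),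
    mstep_trace_eq_sum_eigs hM.1]
  have : (d : ℝ) = ∑ _i : Fin d, (1 : ℝ) := by simp
  rw [this, ← Finset.sum_add_distrib]
  apply Finset.sum_le_sum
  intro i _
  have := Real.add_one_le_exp (Real.log (hM.1.eigenvalues i))
  rw [Real.exp_log (hM.eigenvalues_pos i)] at this
  linarith

open scoped MatrixOrder in
lemma mstep_key_ineq {d : ℕ} {A B : Matrix (Fin d) (Fin d) ℝ} (hA : A.PosDef) (hB : B.PosDef) :
    Real.log B.det + d ≤ Real.log A.det + (A⁻¹ * B).trace := by
  set C := CFC.sqrt B with hCdef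
  have hCH : C.IsHermitian := (Matrix.nonneg_iff_posSemidef.mp (CFC.sqrt_nonneg B)).1
  have hCC : C * C = B := CFC.sqrt_mul_sqrt_self B (Matrix.nonneg_iff_posSemidef.mpr hB.posSemidef)
  have hdetC : C.det * C.det = B.det := by rw [← det_mul, hCC]
  have hCu : IsUnit C.det := by
    have : C.det ≠ 0 := by
      intro h; rw [h, mul_zero] at hdetC; exact hB.det_pos.ne (hdetC)
    exact this.isUnit
  have hM : (C * A⁻¹ * C).PosDef := mstep_posdef_conj hA.inv hCH hCu
  have htr : (C * A⁻¹ * C).trace = (A⁻¹ * B).trace := by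
    rw [trace_mul_cycle, hCC, Matrix.trace_mul_comm]
  have hdet : (C * A⁻¹ * C).det = B.det / A.det := by
    rw [det_mul, det_mul, det_nonsing_inv, Ring.inverse_eq_inv']
    rw [← hdetC]
    field_simp
  have := mstep_logdet_le_trace hM
  rw [htr, hdet, Real.log_div hB.det_pos.ne' hA.det_pos.ne'] at this
  linarith

lemma mstep_dot_trace {d : ℕ} (M : Matrix (Fin d) (Fin d) ℝ) (u : Fin d → ℝ) :
    u ⬝ᵥ (M *ᵥ u) = (M * vecMulVec u u).trace := by
  simp only [Matrix.trace, Matrix.mul_apply, Matrix.vecMulVec_apply, dotProduct,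
    Matrix.mulVec, Matrix.diag, Finset.mul_sum, Finset.sum_mul]
  apply Finset.sum_congr rfl; intro i _
  apply Finset.sum_congr rfl; intro j _
  ring

lemma mstep_posdef_dot_nonneg {d : ℕ} {P : Matrix (Fin d) (Fin d) ℝ} (hP : P.PosDef)
    (v : Fin d → ℝ) : 0 ≤ v ⬝ᵥ (P *ᵥ v) := by
  have := hP.posSemidef.dotProduct_mulVec_nonneg v
  simpa using this

lemma mstep_sum_dot {n N : ℕ} (f : Fin N → Fin n → ℝ) (y : Fin n → ℝ) :
    ∑ i, f i ⬝ᵥ y = (∑ i, f i) ⬝ᵥ y := by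
  simp only [dotProduct, Finset.sum_apply, Finset.sum_mul]
  exact Finset.sum_comm
lemma mstep_dot_sum {n N : ℕ} (f : Fin N → Fin n → ℝ) (y : Fin n → ℝ) :
    ∑ i, y ⬝ᵥ f i = y ⬝ᵥ (∑ i, f i) := by
  simp only [dotProduct, Finset.sum_apply, Finset.mul_sum]
  exact Finset.sum_comm
lemma mstep_mulVec_sum {n N : ℕ} (P : Matrix (Fin n) (Fin n) ℝ) (g : Fin N → Fin n → ℝ) :
    ∑ i, P *ᵥ g i = P *ᵥ (∑ i, g i) := by
  ext j
  simp only [Finset.sum_apply, mulVec, dotProduct, Finset.sum_apply, Finset.mul_sum]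
  exact Finset.sum_comm

/-- M-step closed form for the Gaussian parameters: the weighted mean and weighted
covariance maximize the weighted Gaussian log-likelihood. -/
theorem m_step_gaussian_optimal
    (d N : ℕ) (hN : 1 ≤ N)
    (x : Fin N → Fin d → ℝ)
    (w : Fin N → ℝ) (hw : ∀ i, 0 ≤ w i)
    (hW : 0 < ∑ i, w i)
    (μstar : Fin d → ℝ)
    (hμstar : μstar = (∑ i, w i)⁻¹ • ∑ i, w i • x i)
    (Sstar : Matrix (Fin d) (Fin d) ℝ)
    (hSstar : Sstar = (∑ i, w i)⁻¹ •
        ∑ i, w i • Matrix.vecMulVec (x i - μstar) (x i - μstar))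
    (hSstarPD : Sstar.PosDef) :
    ∀ (μ : Fin d → ℝ) (S : Matrix (Fin d) (Fin d) ℝ), S.PosDef →
      ∑ i, w i * gaussLogDensity d (x i) μ S
        ≤ ∑ i, w i * gaussLogDensity d (x i) μstar Sstar := by
  intro μ S hS
  set W : ℝ := ∑ i, w i with hWdef
  -- the weighted residuals sum to zero
  have hmean : W • μstar = ∑ i, w i • x i := by
    rw [hμstar, smul_inv_smul₀ hW.ne']
  have hsum0 : ∑ i, w i • (x i - μstar) = 0 := by
    simp only [smul_sub, Finset.sum_sub_distrib, ← hmean, ← Finset.sum_smul, ← hWdef]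
    abel
  -- Sstar scaled
  have hScov : W • Sstar = ∑ i, w i • Matrix.vecMulVec (x i - μstar) (x i - μstar) := by
    rw [hSstar, smul_inv_smul₀ hW.ne']
  -- decomposition of the weighted quadratic form
  have decomp : ∀ (ν : Fin d → ℝ) (P : Matrix (Fin d) (Fin d) ℝ),
      ∑ i, w i * ((x i - ν) ⬝ᵥ (P *ᵥ (x i - ν)))
        = W * (P * Sstar).trace + W * ((μstar - ν) ⬝ᵥ (P *ᵥ (μstar - ν))) := by
    intro ν P
    set v : Fin d → ℝ := μstar - ν with hv
    have hsplit : ∀ i, x i - ν = (x i - μstar) + v := by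
      intro i; rw [hv]; abel
    have hterm : ∀ i, w i * ((x i - ν) ⬝ᵥ (P *ᵥ (x i - ν)))
        = w i * ((x i - μstar) ⬝ᵥ (P *ᵥ (x i - μstar)))
          + ((w i • (x i - μstar)) ⬝ᵥ (P *ᵥ v)
          + (v ⬝ᵥ (P *ᵥ (w i • (x i - μstar)))
          + w i * (v ⬝ᵥ (P *ᵥ v)))) := by
      intro i
      rw [hsplit i]
      simp only [mulVec_add, dotProduct_add, add_dotProduct, smul_dotProduct,
        mulVec_smul, dotProduct_smul, smul_eq_mul]
      ring
    rw [Finset.sum_congr rfl (fun i _ => hterm i), Finset.sum_add_distrib,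
      Finset.sum_add_distrib, Finset.sum_add_distrib]
    have h1 : ∑ i, (w i • (x i - μstar)) ⬝ᵥ (P *ᵥ v) = 0 := by
      rw [mstep_sum_dot, hsum0, zero_dotProduct]
    have h2 : ∑ i, v ⬝ᵥ (P *ᵥ (w i • (x i - μstar))) = 0 := by
      rw [mstep_dot_sum, mstep_mulVec_sum, hsum0, mulVec_zero, dotProduct_zero]
    have h3 : ∑ i, w i * ((x i - μstar) ⬝ᵥ (P *ᵥ (x i - μstar))) = W * (P * Sstar).trace := by
      have : ∀ i, w i * ((x i - μstar) ⬝ᵥ (P *ᵥ (x i - μstar)))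
          = (P * (w i • Matrix.vecMulVec (x i - μstar) (x i - μstar))).trace := by
        intro i
        rw [mstep_dot_trace, Matrix.mul_smul, Matrix.trace_smul, smul_eq_mul]
      rw [Finset.sum_congr rfl (fun i _ => this i), ← Matrix.trace_sum, ← Matrix.mul_sum,
        ← hScov, Matrix.mul_smul, Matrix.trace_smul, smul_eq_mul]
    rw [h1, h2, h3, ← Finset.sum_mul, ← hWdef]
    ring
  -- value of the quadratic form at the optimum
  have htrid : (Sstar⁻¹ * Sstar).trace = (d : ℝ) := by
    rw [Matrix.nonsing_inv_mul _ hSstarPD.det_pos.ne'.isUnit]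
    simp
  -- expansion of the objective
  have expand : ∀ (ν : Fin d → ℝ) (T : Matrix (Fin d) (Fin d) ℝ),
      ∑ i, w i * gaussLogDensity d (x i) ν T
        = W * (-((d : ℝ) / 2) * Real.log (2 * Real.pi))
          - W * ((1 / 2) * Real.log T.det)
          - (1 / 2) * ∑ i, w i * ((x i - ν) ⬝ᵥ (T⁻¹ *ᵥ (x i - ν))) := by
    intro ν T
    have : ∀ i, w i * gaussLogDensity d (x i) ν T
        = w i * (-((d : ℝ) / 2) * Real.log (2 * Real.pi))
          - w i * ((1 / 2) * Real.log T.det)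
          - (1 / 2) * (w i * ((x i - ν) ⬝ᵥ (T⁻¹ *ᵥ (x i - ν)))) := by
      intro i; simp only [gaussLogDensity]; ring
    rw [Finset.sum_congr rfl (fun i _ => this i), Finset.sum_sub_distrib,
      Finset.sum_sub_distrib, ← Finset.sum_mul, ← Finset.sum_mul, ← Finset.mul_sum, ← hWdef]
  rw [expand μ S, expand μstar Sstar, decomp μ S⁻¹, decomp μstar Sstar⁻¹, htrid]
  have hqf0 : (μstar - μstar) ⬝ᵥ (Sstar⁻¹ *ᵥ (μstar - μstar)) = 0 := by simp
  rw [hqf0]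
  have hqf : 0 ≤ (μstar - μ) ⬝ᵥ (S⁻¹ *ᵥ (μstar - μ)) := mstep_posdef_dot_nonneg hS.inv _
  have hkey := mstep_key_ineq hS hSstarPD
  have hmul := mul_le_mul_of_nonneg_left hkey hW.le
  nlinarith [hmul, mul_nonneg hW.le hqf]
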